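/- Theorem (converse connection): Let 𝒜 be a quiver over Λ and let R be a set of relations between length-2 paths of 𝒜, each of the form a|v ∼ b|w with a, v, b, w arrows satisfying t(a) = s(v), t(b) = s(w), s(a) = s(b), t(v) = t(w). Assume: (i) every length-2 path appears in at most one relation of R (on either side); (ii) for all arrows a ≠ b with s(a) = s(b) there is exactly one relation of the form a|v ∼ b|w in R; (ii') for all arrows a ≠ b with t(a) = t(b) there is exactly one relation of the form v|a ∼ w|b in R; (iii) for every arrow a there is a unique arrow z_a with s(z_a) = t(a) such that: for every arrow v ≠ z_a with s(v) = t(a) there exist b ≠ a and w with (a|v ∼ b|w) ∈ R, and whenever (a|z_a ∼ b|w) ∈ R one has b = a and w = z_a; (iii') dually, for every arrow a there is a unique arrow z^a with t(z^a) = s(a) such that: for every v ≠ z^a with t(v) = s(a) there exist b ≠ a and w with (v|a ∼ w|b) ∈ R, and whenever (z^a|a ∼ w|b) ∈ R one has b = a and w = z^a; (v) the operation a ⋆ b, defined for a ≠ b with s(a) = s(b) as the unique v such that (a|v ∼ b|w) ∈ R for some w, satisfies the RC-law (a⋆b)⋆(a⋆c) = (b⋆a)⋆(b⋆c) for all pairwise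 distinct a, b, c with a common source. Extend ⋆ by a ⋆' b := a ⋆ b for a ≠ b and a ⋆' a := z_a. Then: each map b ↦ a ⋆' b is a bijection from arrows with source s(a) to arrows with source t(a); the assignment σ(a, b) := (a ⇀ b, a ↼ b), where a ⇀ b is the unique c with a ⋆' c = b and a ↼ b := (a ⇀ b) ⋆' a, is an involutive non-degenerate quiver-theoretic Yang–Baxter map on 𝒜; and the congruence on the path category of 𝒜 generated by R coincides with the congruence generated by the relations x|y ∼ (x⇀y)|(x↼y), so that the presented category ⟨𝒜 | R⟩⁺ is the structure category C(σ). -/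

import Mathlib

/-!
Theorem (embedding of the quiver into the structure category):
For an involutive left-non-degenerate quiver-theoretic Yang–Baxter map `σ` on a quiver `𝒜`,
the canonical map `j : 𝒜 → C(σ)` into the structure category is injective.
-/

open CategoryTheory

universe u v

/-- A quiver over `Λ` with arrows `A`: source and target maps. -/
structure QuiverData (Λ : Type u) (A : Type v) where
  src : A → Λ
  tgt : A → Λ

namespace QuiverData

variable {Λ : Type u} {A : Type v}

/-- The type of vertices, carrying the quiver structure whose arrows from `a` to `b`
are the elements `x : A` with `src x = a` and `tgt x = b`. -/
def V (_Q : QuiverData Λ A) : Type u := Λ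

instance (Q : QuiverData Λ A) : Quiver Q.V where
  Hom a b := {x : A // Q.src x = a ∧ Q.tgt x = b}

def vert (Q : QuiverData Λ A) (l : Λ) : Q.V := l

/-- The arrow of the quiver `Q.V` corresponding to `x : A`. -/
def arr (Q : QuiverData Λ A) (x : A) {a b : Λ}
    (ha : Q.src x = a) (hb : Q.tgt x = b) : Q.vert a ⟶ Q.vert b :=
  ⟨x, ha, hb⟩

/-- The length-two path `x|y` in the path category. -/
def path2 (Q : QuiverData Λ A) {a m b : Λ} (x y : A)
    (hx : Q.src x = a) (hx' : Q.tgt x = m) (hy : Q.src y = m) (hy' : Q.tgt y = b) :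
    (Paths.of Q.V).obj (Q.vert a) ⟶ (Paths.of Q.V).obj (Q.vert b) :=
  (Paths.of Q.V).map (Q.arr x hx hx') ≫ (Paths.of Q.V).map (Q.arr y hy hy')

/-- The relation `x|y ∼ (x ⇀ y)|(x ↼ y)` on the path category, where `hd = ⇀`, `tl = ↼`. -/
inductive ybRel (Q : QuiverData Λ A) (hd tl : A → A → A) :
    HomRel (Paths Q.V)
  | mk (x y : A) (hxy : Q.tgt x = Q.src y)
      (h1 : Q.src (hd x y) = Q.src x)
      (h2 : Q.tgt (hd x y) = Q.src (tl x y))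
      (h3 : Q.tgt (tl x y) = Q.tgt y) :
      ybRel Q hd tl (Q.path2 x y rfl rfl hxy.symm rfl)
        (Q.path2 (hd x y) (tl x y) h1 rfl h2.symm h3)

/-- The structure category `C(σ)`: the quotient of the path category by the congruence
generated by `x|y ∼ (x ⇀ y)|(x ↼ y)`. -/
abbrev SC (Q : QuiverData Λ A) (hd tl : A → A → A) :=
  CategoryTheory.Quotient (Q.ybRel hd tl)

/-- The canonical map `j` from arrows of the quiver to morphisms of the structure category. -/
def jmap (Q : QuiverData Λ A) (hd tl : A → A → A) (x : A) {a b : Λ}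
    (ha : Q.src x = a) (hb : Q.tgt x = b) :
    (Quotient.functor (Q.ybRel hd tl)).obj ((Paths.of Q.V).obj (Q.vert a)) ⟶
      (Quotient.functor (Q.ybRel hd tl)).obj ((Paths.of Q.V).obj (Q.vert b)) :=
  (Quotient.functor (Q.ybRel hd tl)).map ((Paths.of Q.V).map (Q.arr x ha hb))

end QuiverData

/-- The relation on the path category generated by a presentation `R`
consisting of quadratic relations `a|v ∼ b|w`. -/
inductive presRel {Λ : Type u} {A : Type v} (Q : QuiverData Λ A)
    (R : A × A → A × A → Prop) :
    HomRel (Paths Q.V)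
  | mk (a v b w : A) (h : R (a, v) (b, w))
      (h1 : Q.tgt a = Q.src v) (h2 : Q.tgt b = Q.src w)
      (h3 : Q.src a = Q.src b) (h4 : Q.tgt v = Q.tgt w) :
      presRel Q R (Q.path2 a v rfl rfl h1.symm rfl)
        (Q.path2 b w h3.symm rfl h2.symm h4.symm)

/-- The extension `⋆'` of the partial operation `⋆`, with `a ⋆' a := z_a`. -/
def starExt {A : Type v} [DecidableEq A] (star : A → A → A) (zmap : A → A) :
    A → A → A :=
  fun a b => if a = b then zmap a else star a b

/-- The defining property of the distinguished arrow `z_a` of condition (iii). -/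
def IsZ {Λ : Type u} {A : Type v} (Q : QuiverData Λ A)
    (R : A × A → A × A → Prop) (a z : A) : Prop :=
  Q.src z = Q.tgt a ∧
    (∀ v, Q.src v = Q.tgt a → v ≠ z → ∃ b w, b ≠ a ∧ R (a, v) (b, w)) ∧
    (∀ b w, R (a, z) (b, w) → b = a ∧ w = z)

/-- The defining property of the distinguished arrow `z^a` of condition (iii'). -/
def IsZco {Λ : Type u} {A : Type v} (Q : QuiverData Λ A)
    (R : A × A → A × A → Prop) (a z : A) : Prop :=
  Q.tgt z = Q.src a ∧
    (∀ v, Q.tgt v = Q.src a → v ≠ z → ∃ b w, b ≠ a ∧ R (v, a) (w, b)) ∧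
    (∀ b w, R (z, a) (w, b) → b = a ∧ w = z)

theorem converse_connection
    {Λ : Type u} {A : Type v} [DecidableEq A] (Q : QuiverData Λ A)
    -- `R` is a set of quadratic relations `a|v ∼ b|w`, viewed as a symmetric relation
    -- on length-2 paths
    (R : A × A → A × A → Prop)
    (hsymm : ∀ p q, R p q → R q p)
    (hwf : ∀ p q, R p q → Q.tgt p.1 = Q.src p.2 ∧ Q.tgt q.1 = Q.src q.2 ∧
      Q.src p.1 = Q.src q.1 ∧ Q.tgt p.2 = Q.tgt q.2)
    -- (i) every length-2 path appears in at most one relation of `R`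
    (huniq : ∀ p q q', R p q → R p q' → q = q')
    -- (ii) for `a ≠ b` with the same source, exactly one relation `a|v ∼ b|w`
    (hii : ∀ a b, a ≠ b → Q.src a = Q.src b → ∃! vw : A × A, R (a, vw.1) (b, vw.2))
    -- (ii') for `a ≠ b` with the same target, exactly one relation `v|a ∼ w|b`
    (hii' : ∀ a b, a ≠ b → Q.tgt a = Q.tgt b → ∃! vw : A × A, R (vw.1, a) (vw.2, b))
    -- (iii) `z_a` is the unique arrow satisfying `IsZ`
    (zmap : A → A)
    (hz : ∀ a, IsZ Q R a (zmap a))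
    (hzu : ∀ a z, IsZ Q R a z → z = zmap a)
    -- (iii') for every `a` there is a unique arrow `z^a` satisfying `IsZco`
    (hz' : ∀ a, ∃! z, IsZco Q R a z)
    -- the partial operation `⋆` determined by `R`: for `a ≠ b` with the same source,
    -- `a ⋆ b` is the unique `v` with `(a|v ∼ b|w) ∈ R` for some `w`
    (star : A → A → A)
    (hstar : ∀ a b, a ≠ b → Q.src a = Q.src b → ∃ w, R (a, star a b) (b, w))
    -- (v) the RC-law for `⋆`
    (hrc : ∀ a b c, a ≠ b → b ≠ c → a ≠ c → Q.src a = Q.src b → Q.src a = Q.src c →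
      star (star a b) (star a c) = star (star b a) (star b c))
    -- the map `⇀`: `a ⇀ b` is the unique arrow `c` with `a ⋆' c = b`
    (hdm : A → A → A)
    (hhd : ∀ a b, Q.tgt a = Q.src b →
      Q.src (hdm a b) = Q.src a ∧ starExt star zmap a (hdm a b) = b)
    -- the map `↼`: `a ↼ b := (a ⇀ b) ⋆' a`
    (tlm : A → A → A)
    (htl : ∀ a b, tlm a b = starExt star zmap (hdm a b) a) :
    -- conclusion 1: each `b ↦ a ⋆' b` is a bijection from arrows with source `s a`
    -- to arrows with source `t a`
    ((∀ a b, Q.src b = Q.src a → Q.src (starExt star zmap a b) = Q.tgt a) ∧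
      (∀ a b b', Q.src b = Q.src a → Q.src b' = Q.src a →
        starExt star zmap a b = starExt star zmap a b' → b = b') ∧
      (∀ a c, Q.src c = Q.tgt a → ∃ b, Q.src b = Q.src a ∧ starExt star zmap a b = c)) ∧
    -- conclusion 2: `σ(a,b) = (a ⇀ b, a ↼ b)` is a morphism of quivers …
    (∀ a b, Q.tgt a = Q.src b →
      Q.src (hdm a b) = Q.src a ∧ Q.tgt (hdm a b) = Q.src (tlm a b) ∧
        Q.tgt (tlm a b) = Q.tgt b) ∧
    -- … satisfying the Yang–Baxter equation …
    (∀ a b c, Q.tgt a = Q.src b → Q.tgt b = Q.src c →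
      hdm (hdm a b) (hdm (tlm a b) c) = hdm a (hdm b c) ∧
      tlm (hdm a b) (hdm (tlm a b) c) = hdm (tlm a (hdm b c)) (tlm b c) ∧
      tlm (tlm a b) c = tlm (tlm a (hdm b c)) (tlm b c)) ∧
    -- … involutive …
    (∀ a b, Q.tgt a = Q.src b →
      hdm (hdm a b) (tlm a b) = a ∧ tlm (hdm a b) (tlm a b) = b) ∧
    -- … left-non-degenerate …
    ((∀ x y y', Q.src y = Q.tgt x → Q.src y' = Q.tgt x → hdm x y = hdm x y' → y = y') ∧
      (∀ x z, Q.src z = Q.src x → ∃ y, Q.src y = Q.tgt x ∧ hdm x y = z)) ∧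
    -- … and right-non-degenerate:
    ((∀ x x' y, Q.tgt x = Q.src y → Q.tgt x' = Q.src y → tlm x y = tlm x' y → x = x') ∧
      (∀ y z, Q.tgt z = Q.tgt y → ∃ x, Q.tgt x = Q.src y ∧ tlm x y = z)) ∧
    -- conclusion 3: the congruence generated by `R` coincides with the congruence
    -- generated by `x|y ∼ (x ⇀ y)|(x ↼ y)`, i.e. `⟨𝒜 ∣ R⟩⁺ = C(σ)`
    (∀ (X Y : Paths Q.V) (f g : X ⟶ Y),
      (Quotient.functor (presRel Q R)).map f = (Quotient.functor (presRel Q R)).map g ↔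
        (Quotient.functor (Q.ybRel hdm tlm)).map f =
          (Quotient.functor (Q.ybRel hdm tlm)).map g) := by
  classical
  have hEd : ∀ a, starExt star zmap a a = zmap a := fun a => if_pos rfl
  have hEn : ∀ a b, a ≠ b → starExt star zmap a b = star a b := fun a b h => if_neg h
  -- the full symmetric form of a relation of `R`
  have hsf : ∀ a b, a ≠ b → Q.src a = Q.src b → R (a, star a b) (b, star b a) := by
    intro a b hab hs
    obtain ⟨w, hw⟩ := hstar a b hab hs
    obtain ⟨w', hw'⟩ := hstar b a (Ne.symm hab) hs.symm
    obtain ⟨vw, -, huu⟩ := hii a b hab hs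
    have e1 : ((star a b, w) : A × A) = vw := huu _ hw
    have e2 : ((w', star b a) : A × A) = vw := huu _ (hsymm _ _ hw')
    have hws : w = star b a := congrArg Prod.snd (e1.trans e2.symm)
    rwa [hws] at hw
  -- characterization of non-diagonal relations
  have hchar : ∀ a v b w, R (a, v) (b, w) → a ≠ b → v = star a b ∧ w = star b a := by
    intro a v b w h hab
    have hs := (hwf _ _ h).2.2.1
    obtain ⟨vw, -, huu⟩ := hii a b hab hs
    have e1 := huu (v, w) h
    have e2 := huu (star a b, star b a) (hsf a b hab hs)
    have e := e1.trans e2.symm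
    exact ⟨congrArg Prod.fst e, congrArg Prod.snd e⟩
  -- diagonal relations
  have hdiag : ∀ a v w, R (a, v) (a, w) → v = zmap a ∧ w = zmap a := by
    intro a v w h
    by_cases hv : v = zmap a
    · subst hv
      exact ⟨rfl, ((hz a).2.2 a w h).2⟩
    · exfalso
      obtain ⟨b, w', hb, hR⟩ := (hz a).2.1 v ((hwf _ _ h).1).symm hv
      exact hb (congrArg Prod.fst (huniq _ _ _ hR h))
  -- star a b ≠ star b a
  have hsne : ∀ a b, a ≠ b → Q.src a = Q.src b → star a b ≠ star b a := by
    intro a b hab hs heq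
    have hR := hsf a b hab hs
    rw [heq] at hR
    obtain ⟨ζ, hζ, -⟩ := hz' (star b a)
    have ha : a = ζ := by
      by_contra hne
      obtain ⟨b', w', hb', hR'⟩ := hζ.2.1 a (hwf _ _ hR).1 hne
      exact hb' (congrArg Prod.snd (huniq _ _ _ hR' hR))
    have hb2 : b = ζ := by
      by_contra hne
      obtain ⟨b', w', hb', hR'⟩ := hζ.2.1 b (hwf _ _ (hsymm _ _ hR)).1 hne
      exact hb' (congrArg Prod.snd (huniq _ _ _ hR' (hsymm _ _ hR)))
    exact hab (ha.trans hb2.symm)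
  -- z is injective
  have hzinj : ∀ x y, zmap x = zmap y → x = y := by
    intro x y he
    obtain ⟨ζ, hζ, -⟩ := hz' (zmap x)
    have hx : x = ζ := by
      by_contra hne
      obtain ⟨b, w, hb, hR⟩ := hζ.2.1 x ((hz x).1).symm hne
      exact hb ((hz x).2.2 w b hR).2
    have hy : y = ζ := by
      by_contra hne
      obtain ⟨b, w, hb, hR⟩ := hζ.2.1 y (by rw [he]; exact ((hz y).1).symm) hne
      rw [he] at hR
      have hbz : b = zmap y := ((hz y).2.2 w b hR).2
      rw [← he] at hbz
      exact hb hbz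
    exact hx.trans hy.symm
  -- z is surjective
  have hzsurj : ∀ y, ∃ x, Q.tgt x = Q.src y ∧ zmap x = y := by
    intro y
    obtain ⟨ζ, hζ, -⟩ := hz' y
    refine ⟨ζ, hζ.1, ?_⟩
    by_contra hne
    obtain ⟨b, w, hb, hR⟩ := (hz ζ).2.1 y hζ.1.symm (fun h => hne h.symm)
    exact hb (hζ.2.2 w b hR).2
  -- conclusion 1, part 1
  have hsrcE : ∀ a b, Q.src b = Q.src a → Q.src (starExt star zmap a b) = Q.tgt a := by
    intro a b h
    by_cases hab : a = b
    · rw [← hab, hEd]; exact (hz a).1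
    · rw [hEn a b hab]
      exact ((hwf _ _ (hsf a b hab h.symm)).1).symm
  -- conclusion 1, part 2 (injectivity)
  have hEinj : ∀ a b b', Q.src b = Q.src a → Q.src b' = Q.src a →
      starExt star zmap a b = starExt star zmap a b' → b = b' := by
    intro a b b' hb hb' he
    by_cases h1 : a = b
    · by_cases h2 : a = b'
      · exact h1.symm.trans h2
      · exfalso
        rw [← h1, hEd, hEn a b' h2] at he
        have hR := hsf a b' h2 hb'.symm
        rw [← he] at hR
        exact h2 ((hz a).2.2 b' (star b' a) hR).1.symm
    · by_cases h2 : a = b'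
      · exfalso
        rw [← h2, hEd, hEn a b h1] at he
        have hR := hsf a b h1 hb.symm
        rw [he] at hR
        exact h1 ((hz a).2.2 b (star b a) hR).1.symm
      · rw [hEn a b h1, hEn a b' h2] at he
        have hRb := hsf a b h1 hb.symm
        have hRb' := hsf a b' h2 hb'.symm
        rw [he] at hRb
        exact congrArg Prod.fst (huniq _ _ _ hRb hRb')
  -- conclusion 1, part 3 (surjectivity)
  have hEsurj : ∀ a c, Q.src c = Q.tgt a → ∃ b, Q.src b = Q.src a ∧ starExt star zmap a b = c := by
    intro a c hc
    by_cases hcz : c = zmap a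
    · exact ⟨a, rfl, by rw [hEd, hcz]⟩
    · obtain ⟨b, w, hb, hR⟩ := (hz a).2.1 c hc hcz
      have hab : a ≠ b := fun h' => hb h'.symm
      have hcs := (hchar a c b w hR hab).1
      exact ⟨b, ((hwf _ _ hR).2.2.1).symm, by rw [hEn a b hab, ← hcs]⟩
  -- hdm computes the inverse of starExt
  have hdm_eq : ∀ a c, Q.src c = Q.src a → hdm a (starExt star zmap a c) = c := by
    intro a c hcs
    obtain ⟨h1, h2⟩ := hhd a _ (hsrcE a c hcs).symm
    exact hEinj a _ c h1 hcs h2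
  -- the key lemma: (a⋆b) ⋆' z_a = z_{b⋆a}
  have hL : ∀ a b, a ≠ b → Q.src a = Q.src b →
      starExt star zmap (star a b) (zmap a) = zmap (star b a) := by
    intro a b hab hs
    have hR := hsf a b hab hs
    have hsu : Q.src (star a b) = Q.tgt a := ((hwf _ _ hR).1).symm
    have htuv : Q.tgt (star a b) = Q.tgt (star b a) := (hwf _ _ hR).2.2.2
    obtain ⟨e, he, hev⟩ := hEsurj (star a b) (zmap (star b a))
      (by rw [(hz (star b a)).1]; exact htuv.symm)
    obtain ⟨c, hc, hce⟩ := hEsurj a e (by rw [he]; exact hsu)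
    by_cases hca : c = a
    · rw [hca, hEd] at hce
      rw [← hce] at hev
      exact hev
    · by_cases hcb : c = b
      · exfalso
        rw [hcb, hEn a b hab] at hce
        rw [← hce, hEd] at hev
        exact hsne a b hab hs (hzinj _ _ hev)
      · exfalso
        rw [hEn a c (fun h' => hca h'.symm)] at hce
        have hacab : star a c ≠ star a b := by
          intro h'
          exact hcb (hEinj a c b hc hs.symm
            (by rw [hEn a c (fun h'' => hca h''.symm), hEn a b hab]; exact h'))
        rw [← hce, hEn (star a b) (star a c) (fun h' => hacab h'.symm)] at hev
        rw [hrc a b c hab (fun h' => hcb h'.symm) (fun h' => hca h'.symm) hs hc.symm] at hev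
        have hbcba : star b c ≠ star b a := by
          intro h'
          exact hca (hEinj b c a (hc.trans hs) hs
            (by rw [hEn b c (fun h'' => hcb h''.symm), hEn b a (Ne.symm hab)]; exact h'))
        have hsbc : Q.src b = Q.src c := hs.symm.trans hc.symm
        have hfin := hEinj (star b a) (star b c) (star b a)
          ((((hwf _ _ (hsf b c (fun h' => hcb h'.symm) hsbc)).1).symm).trans ((hwf _ _ hR).2.1))
          rfl
          (by rw [hEn (star b a) (star b c) (fun h' => hbcba h'.symm), hEd]; exact hev)
        exact hbcba hfin
  -- the extended RC law
  have hERC : ∀ a b c, Q.src a = Q.src b → Q.src a = Q.src c →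
      starExt star zmap (starExt star zmap a b) (starExt star zmap a c) =
        starExt star zmap (starExt star zmap b a) (starExt star zmap b c) := by
    intro a b c hab hac
    by_cases h1 : a = b
    · rw [h1]
    · by_cases h2 : c = a
      · rw [h2, hEd, hEn a b h1, hEn b a (Ne.symm h1), hEd (star b a)]
        exact hL a b h1 hab
      · by_cases h3 : c = b
        · rw [h3, hEn a b h1, hEd (star a b), hEn b a (Ne.symm h1), hEd b]
          exact (hL b a (Ne.symm h1) hab.symm).symm
        · rw [hEn a b h1, hEn a c (fun h' => h2 h'.symm), hEn b a (Ne.symm h1),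
            hEn b c (fun h' => h3 h'.symm)]
          have hne1 : star a b ≠ star a c := by
            intro h'
            exact h3 (hEinj a b c hab.symm hac.symm
              (by rw [hEn a b h1, hEn a c (fun h'' => h2 h''.symm)]; exact h')).symm
          have hne2 : star b a ≠ star b c := by
            intro h'
            exact h2 (hEinj b a c hab (hac.symm.trans hab)
              (by rw [hEn b a (Ne.symm h1), hEn b c (fun h'' => h3 h''.symm)]; exact h')).symm
          rw [hEn (star a b) (star a c) hne1, hEn (star b a) (star b c) hne2]
          exact hrc a b c h1 (fun h' => h3 h'.symm) (fun h' => h2 h'.symm) hab hac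
  -- conclusion 2
  have hquiv : ∀ a b, Q.tgt a = Q.src b →
      Q.src (hdm a b) = Q.src a ∧ Q.tgt (hdm a b) = Q.src (tlm a b) ∧
        Q.tgt (tlm a b) = Q.tgt b := by
    intro a b h
    obtain ⟨hp1, hp2⟩ := hhd a b h
    refine ⟨hp1, ?_, ?_⟩
    · rw [htl]
      exact (hsrcE (hdm a b) a hp1.symm).symm
    · rw [htl]
      by_cases hpa : hdm a b = a
      · have hb : b = zmap a := by rw [← hp2, hpa, hEd]
        rw [hpa, hEd, hb]
      · have hR := hsf (hdm a b) a hpa hp1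
        have h22 := (hwf _ _ hR).2.2.2
        rw [← hEn a (hdm a b) (fun h' => hpa h'.symm), hp2] at h22
        rw [hEn (hdm a b) a hpa]
        exact h22
  -- involutivity
  have hinv : ∀ a b, Q.tgt a = Q.src b →
      hdm (hdm a b) (tlm a b) = a ∧ tlm (hdm a b) (tlm a b) = b := by
    intro a b h
    obtain ⟨hp1, hp2⟩ := hhd a b h
    have h1 : hdm (hdm a b) (tlm a b) = a := by
      rw [htl]
      exact hdm_eq (hdm a b) a hp1.symm
    exact ⟨h1, by rw [htl (hdm a b) (tlm a b), h1, hp2]⟩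
  -- left non-degeneracy
  have linj : ∀ x y y', Q.src y = Q.tgt x → Q.src y' = Q.tgt x → hdm x y = hdm x y' → y = y' := by
    intro x y y' hy hy' he
    rw [← (hhd x y hy.symm).2, ← (hhd x y' hy'.symm).2, he]
  have lsurj : ∀ x z, Q.src z = Q.src x → ∃ y, Q.src y = Q.tgt x ∧ hdm x y = z :=
    fun x z hz0 => ⟨starExt star zmap x z, hsrcE x z hz0, hdm_eq x z hz0⟩
  -- right non-degeneracy
  have rinj : ∀ x x' y, Q.tgt x = Q.src y → Q.tgt x' = Q.src y → tlm x y = tlm x' y → x = x' := by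
    intro x x' y hx hx' he
    obtain ⟨hp1, hp2⟩ := hhd x y hx
    obtain ⟨hq1, hq2⟩ := hhd x' y hx'
    rw [htl x y, htl x' y] at he
    by_cases h1 : hdm x y = x
    · by_cases h2 : hdm x' y = x'
      · refine hzinj x x' ?_
        have hy1 : zmap x = y := by rw [← hp2, h1, hEd]
        have hy2 : zmap x' = y := by rw [← hq2, h2, hEd]
        exact hy1.trans hy2.symm
      · exfalso
        rw [h1, hEd, hEn (hdm x' y) x' h2] at he
        have hy1 : zmap x = y := by rw [← hp2, h1, hEd]
        have hy2 : y = star x' (hdm x' y) := by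
          conv_lhs => rw [← hq2]
          rw [hEn x' (hdm x' y) (fun h' => h2 h'.symm)]
        exact hsne x' (hdm x' y) (fun h' => h2 h'.symm) hq1.symm
          (hy2.symm.trans (hy1.symm.trans he))
    · by_cases h2 : hdm x' y = x'
      · exfalso
        rw [h2, hEd, hEn (hdm x y) x h1] at he
        have hy2 : zmap x' = y := by rw [← hq2, h2, hEd]
        have hy1 : y = star x (hdm x y) := by
          conv_lhs => rw [← hp2]
          rw [hEn x (hdm x y) (fun h' => h1 h'.symm)]
        exact hsne x (hdm x y) (fun h' => h1 h'.symm) hp1.symm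
          (hy1.symm.trans (hy2.symm.trans he.symm))
      · rw [hEn (hdm x y) x h1, hEn (hdm x' y) x' h2] at he
        have hR1 : R (x, y) (hdm x y, star (hdm x y) x) := by
          have h0 := hsf x (hdm x y) (fun h' => h1 h'.symm) hp1.symm
          rwa [← hEn x (hdm x y) (fun h' => h1 h'.symm), hp2] at h0
        have hR2 : R (x', y) (hdm x' y, star (hdm x y) x) := by
          have h0 := hsf x' (hdm x' y) (fun h' => h2 h'.symm) hq1.symm
          rwa [← hEn x' (hdm x' y) (fun h' => h2 h'.symm), hq2, ← he] at h0
        have hy1 : y = star x (hdm x y) := by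
          conv_lhs => rw [← hp2]
          rw [hEn x (hdm x y) (fun h' => h1 h'.symm)]
        have hyne : y ≠ star (hdm x y) x := fun hcontra =>
          hsne x (hdm x y) (fun h' => h1 h'.symm) hp1.symm (hy1.symm.trans hcontra)
        obtain ⟨vw, -, huu⟩ := hii' y (star (hdm x y) x) hyne (hwf _ _ hR1).2.2.2
        have e1 := huu (x, hdm x y) hR1
        have e2 := huu (x', hdm x' y) hR2
        exact congrArg Prod.fst (e1.trans e2.symm)
  have rsurj : ∀ y z, Q.tgt z = Q.tgt y → ∃ x, Q.tgt x = Q.src y ∧ tlm x y = z := by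
    intro y z htzy
    by_cases hzy : z = y
    · subst hzy
      obtain ⟨x, hx, hzx⟩ := hzsurj z
      refine ⟨x, hx, ?_⟩
      have hdmx : hdm x z = x := by
        have h0 := hdm_eq x x rfl
        rwa [hEd, hzx] at h0
      rw [htl x z, hdmx, hEd]
      exact hzx
    · obtain ⟨⟨m, n⟩, hR, -⟩ := hii' y z (fun h => hzy h.symm) htzy.symm
      have hmn : m ≠ n := by
        intro h
        subst h
        obtain ⟨h1', h2'⟩ := hdiag m y z hR
        exact hzy (h2'.trans h1'.symm)
      have hy : y = star m n := (hchar m y n z hR hmn).1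
      have hzz : z = star n m := (hchar m y n z hR hmn).2
      have hsmn : Q.src m = Q.src n := (hwf _ _ hR).2.2.1
      refine ⟨m, (hwf _ _ hR).1, ?_⟩
      have hdmy : hdm m y = n := by
        have h0 := hdm_eq m n hsmn.symm
        rwa [hEn m n hmn, ← hy] at h0
      rw [htl m y, hdmy, hEn n m (Ne.symm hmn), ← hzz]
  -- abstract core of the Yang–Baxter computation
  have core : ∀ x u w, Q.src u = Q.src x → Q.src w = Q.src x →
      ∀ b' c', b' = starExt star zmap x u →
        c' = starExt star zmap (starExt star zmap u x) (starExt star zmap u w) →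
      (hdm (hdm x b') (hdm (tlm x b') c') = hdm x (hdm b' c') ∧
       tlm (hdm x b') (hdm (tlm x b') c') = hdm (tlm x (hdm b' c')) (tlm b' c') ∧
       tlm (tlm x b') c' = tlm (tlm x (hdm b' c')) (tlm b' c')) := by
    intro x u w hu hw b' c' hb hc
    subst hb
    subst hc
    have huw : Q.src u = Q.src w := hu.trans hw.symm
    have d1 : hdm x (starExt star zmap x u) = u := hdm_eq x u hu
    have d2 : tlm x (starExt star zmap x u) = starExt star zmap u x := by rw [htl, d1]
    have d3 : hdm (tlm x (starExt star zmap x u))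
        (starExt star zmap (starExt star zmap u x) (starExt star zmap u w))
        = starExt star zmap u w := by
      rw [d2]
      exact hdm_eq (starExt star zmap u x) (starExt star zmap u w)
        ((hsrcE u w huw.symm).trans (hsrcE u x hu.symm).symm)
    have d4 : hdm (hdm x (starExt star zmap x u))
        (hdm (tlm x (starExt star zmap x u))
          (starExt star zmap (starExt star zmap u x) (starExt star zmap u w))) = w := by
      rw [d1, d3]
      exact hdm_eq u w huw.symm
    have d5 : hdm (starExt star zmap x u)
        (starExt star zmap (starExt star zmap u x) (starExt star zmap u w))
        = starExt star zmap x w := by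
      rw [hERC u x w hu huw]
      exact hdm_eq (starExt star zmap x u) (starExt star zmap x w)
        ((hsrcE x w hw).trans (hsrcE x u hu).symm)
    have d6 : tlm x (hdm (starExt star zmap x u)
        (starExt star zmap (starExt star zmap u x) (starExt star zmap u w)))
        = starExt star zmap w x := by
      rw [d5, htl, hdm_eq x w hw]
    have d7 : tlm (starExt star zmap x u)
        (starExt star zmap (starExt star zmap u x) (starExt star zmap u w))
        = starExt star zmap (starExt star zmap w x) (starExt star zmap w u) := by
      rw [htl, d5, hERC x w u hw.symm hu.symm]
    refine ⟨?_, ?_, ?_⟩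
    · rw [d4, d5, hdm_eq x w hw]
    · rw [d1, d3, d6, d7, htl u (starExt star zmap u w), hdm_eq u w huw.symm]
      exact (hdm_eq (starExt star zmap w x) (starExt star zmap w u)
        ((hsrcE w u huw).trans (hsrcE w x hw.symm).symm)).symm
    · rw [d2, d6, d7, htl (starExt star zmap u x) _,
        hdm_eq (starExt star zmap u x) (starExt star zmap u w)
          ((hsrcE u w huw.symm).trans (hsrcE u x hu.symm).symm),
        hERC u w x huw hu,
        htl (starExt star zmap w x) _,
        hdm_eq (starExt star zmap w x) (starExt star zmap w u)
          ((hsrcE w u huw).trans (hsrcE w x hw.symm).symm)]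
  -- the Yang–Baxter equations
  have hyb : ∀ a b c, Q.tgt a = Q.src b → Q.tgt b = Q.src c →
      hdm (hdm a b) (hdm (tlm a b) c) = hdm a (hdm b c) ∧
      tlm (hdm a b) (hdm (tlm a b) c) = hdm (tlm a (hdm b c)) (tlm b c) ∧
      tlm (tlm a b) c = tlm (tlm a (hdm b c)) (tlm b c) := by
    intro a b c hab hbc
    have hp1 : Q.src (hdm a b) = Q.src a := (hhd a b hab).1
    have hp2 := (hhd a b hab).2
    have htlb : Q.tgt (tlm a b) = Q.src c := by
      rw [(hquiv a b hab).2.2]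
      exact hbc
    have hq2 := (hhd (tlm a b) c htlb).2
    have hpq : Q.tgt (hdm a b) = Q.src (hdm (tlm a b) c) := by
      rw [(hhd (tlm a b) c htlb).1]
      exact (hquiv a b hab).2.1
    have hr1 : Q.src (hdm (hdm a b) (hdm (tlm a b) c)) = Q.src (hdm a b) :=
      (hhd _ _ hpq).1
    have hr2 := (hhd _ _ hpq).2
    have hsra : Q.src (hdm (hdm a b) (hdm (tlm a b) c)) = Q.src a := hr1.trans hp1
    have e1 : c = starExt star zmap (starExt star zmap (hdm a b) a)
        (starExt star zmap (hdm a b) (hdm (hdm a b) (hdm (tlm a b) c))) := by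
      rw [hr2, ← htl a b, hq2]
    exact core a (hdm a b) (hdm (hdm a b) (hdm (tlm a b) c)) hp1 hsra b c hp2.symm e1
  -- congruence comparison machinery
  have path2_congr : ∀ {a m b m' : Λ} (x y x' y' : A)
      (hx : Q.src x = a) (hx' : Q.tgt x = m) (hy : Q.src y = m) (hy' : Q.tgt y = b)
      (hx2 : Q.src x' = a) (hx2' : Q.tgt x' = m') (hy2 : Q.src y' = m') (hy2' : Q.tgt y' = b),
      x = x' → y = y' →
      Q.path2 x y hx hx' hy hy' = Q.path2 x' y' hx2 hx2' hy2 hy2' := by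
    intro a m b m' x y x' y' hx hx' hy hy' hx2 hx2' hy2 hy2' hxe hye
    subst hxe
    subst hye
    have hm : m = m' := hx'.symm.trans hx2'
    subst hm
    rfl
  have key : ∀ (r₁ r₂ : HomRel (Paths Q.V)),
      (∀ (X Y : Paths Q.V) (f g : X ⟶ Y), r₁ f g →
        (Quotient.functor r₂).map f = (Quotient.functor r₂).map g) →
      ∀ (X Y : Paths Q.V) (f g : X ⟶ Y),
        (Quotient.functor r₁).map f = (Quotient.functor r₁).map g →
        (Quotient.functor r₂).map f = (Quotient.functor r₂).map g := by
    intro r₁ r₂ hgen X Y f g h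
    exact congrArg
      (fun φ => (CategoryTheory.Quotient.lift r₁ (Quotient.functor r₂) hgen).map φ) h
  have gen1 : ∀ (X Y : Paths Q.V) (f g : X ⟶ Y), presRel Q R f g →
      (Quotient.functor (Q.ybRel hdm tlm)).map f =
        (Quotient.functor (Q.ybRel hdm tlm)).map g := by
    intro X Y f g h
    cases h with
    | mk a v b w hR h1 h2 h3 h4 =>
      by_cases hab : a = b
      · subst hab
        obtain ⟨hv, hw⟩ := hdiag a v w hR
        have hvw : v = w := hv.trans hw.symm
        subst hvw
        exact congrArg _ (path2_congr a v a v rfl rfl h1.symm rfl h3.symm rfl h2.symm h4.symm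
          rfl rfl)
      · have hv : v = star a b := (hchar a v b w hR hab).1
        have hw : w = star b a := (hchar a v b w hR hab).2
        have hsab : Q.src a = Q.src b := (hwf _ _ hR).2.2.1
        have hdmav : hdm a v = b := by
          have h0 := hdm_eq a b hsab.symm
          rwa [hEn a b hab, ← hv] at h0
        have htlav : tlm a v = w := by
          rw [htl, hdmav, hEn b a (Ne.symm hab), ← hw]
        have hy := QuiverData.ybRel.mk (Q := Q) (hd := hdm) (tl := tlm) a v h1
          (by rw [hdmav]; exact h3.symm) (by rw [hdmav, htlav]; exact h2)
          (by rw [htlav]; exact h4.symm)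
        exact (CategoryTheory.Quotient.sound _ hy).trans
          (congrArg _ (path2_congr (hdm a v) (tlm a v) b w _ _ _ _ _ _ _ _ hdmav htlav))
  have gen2 : ∀ (X Y : Paths Q.V) (f g : X ⟶ Y), Q.ybRel hdm tlm f g →
      (Quotient.functor (presRel Q R)).map f = (Quotient.functor (presRel Q R)).map g := by
    intro X Y f g h
    cases h with
    | mk x y hxy h1 h2 h3 =>
      obtain ⟨hp1, hp2⟩ := hhd x y hxy
      by_cases hpx : hdm x y = x
      · have hyz : y = zmap x := by rw [← hp2, hpx, hEd]
        have htly : tlm x y = y := by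
          rw [htl, hpx, hEd]
          exact hyz.symm
        exact congrArg _ (path2_congr x y (hdm x y) (tlm x y) rfl rfl hxy.symm rfl
          h1 rfl h2.symm h3 hpx.symm htly.symm)
      · have hxp : x ≠ hdm x y := fun h' => hpx h'.symm
        have hR : R (x, y) (hdm x y, tlm x y) := by
          have h0 := hsf x (hdm x y) hxp hp1.symm
          rw [← hEn x (hdm x y) hxp, hp2] at h0
          rwa [← hEn (hdm x y) x hpx, ← htl x y] at h0
        have hp := presRel.mk (Q := Q) (R := R) x y (hdm x y) (tlm x y) hR hxy h2
          hp1.symm h3.symm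
        exact CategoryTheory.Quotient.sound _ hp
  refine ⟨⟨hsrcE, hEinj, hEsurj⟩, hquiv, hyb, hinv, ⟨linj, lsurj⟩, ⟨rinj, rsurj⟩, ?_⟩
  intro X Y f g
  exact ⟨key (presRel Q R) (Q.ybRel hdm tlm) gen1 X Y f g,
         key (Q.ybRel hdm tlm) (presRel Q R) gen2 X Y f g⟩
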